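/- arXiv:2004.13963 — 2 statements merged into one kernel-verified Lean document; each statement's English description precedes it below -/
import Mathlib

section
/- Consider the design matrix X_γ with rows (1, x_j, (x_j-γ)_+·(x_j-γ)) where n q_0 visits are at x=0, n q_1 visits at x=γ, and n q_2 visits at x=1, with q_0,q_1,q_2 > 0 and γ in (0,1). Then X_γᵀX_γ is invertible and the (2,2) entry of σ²(X_γᵀX_γ)^{-1} equals (σ²/γ²)(1/(n q_0) + 1/(n q_1)). -/
open Matrix

lemma sum_three_blocks (a b c : ℕ) (A B C : ℝ) :
    ∑ k ∈ Finset.range (a + b + c),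
      (if k < a then A else if k < a + b then B else C) = a * A + b * B + c * C := by
  rw [Finset.range_eq_Ico,
    ← Finset.sum_Ico_consecutive _ (Nat.zero_le (a + b)) (by omega : a + b ≤ a + b + c),
    ← Finset.sum_Ico_consecutive _ (Nat.zero_le a) (by omega : a ≤ a + b)]
  have h1 : ∑ k ∈ Finset.Ico 0 a, (if k < a then A else if k < a + b then B else C)
      = a * A := by
    have e : ∀ k ∈ Finset.Ico 0 a, (if k < a then A else if k < a + b then B else C) = A := by
      intro k hk
      simp only [Finset.mem_Ico] at hk
      rw [if_pos hk.2]
    rw [Finset.sum_congr rfl e, Finset.sum_const, Nat.card_Ico, nsmul_eq_mul]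
    norm_num
  have h2 : ∑ k ∈ Finset.Ico a (a + b), (if k < a then A else if k < a + b then B else C)
      = b * B := by
    have e : ∀ k ∈ Finset.Ico a (a + b),
        (if k < a then A else if k < a + b then B else C) = B := by
      intro k hk
      simp only [Finset.mem_Ico] at hk
      rw [if_neg (by omega), if_pos (by omega)]
    rw [Finset.sum_congr rfl e, Finset.sum_const, Nat.card_Ico, nsmul_eq_mul]
    norm_num
  have h3 : ∑ k ∈ Finset.Ico (a + b) (a + b + c),
      (if k < a then A else if k < a + b then B else C) = c * C := by
    have e : ∀ k ∈ Finset.Ico (a + b) (a + b + c),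
        (if k < a then A else if k < a + b then B else C) = C := by
      intro k hk
      simp only [Finset.mem_Ico] at hk
      rw [if_neg (by omega), if_neg (by omega)]
    rw [Finset.sum_congr rfl e, Finset.sum_const, Nat.card_Ico, nsmul_eq_mul]
    norm_num
  rw [h1, h2, h3]

/-- For the broken-stick design matrix with `n q₀` visits at 0, `n q₁` at γ and `n q₂` at 1,
`XᵀX` is invertible and the (2,2) entry of `σ²(XᵀX)⁻¹` equals `(σ²/γ²)(1/(n q₀) + 1/(n q₁))`. -/
theorem stmt_7 (γ σ : ℝ) (hγ : γ ∈ Set.Ioo (0 : ℝ) 1) (hσ : 0 < σ)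
    (n0 n1 n2 : ℕ) (h0 : 0 < n0) (h1 : 0 < n1) (h2 : 0 < n2)
    (n : ℝ) (hn : n = (n0 : ℝ) + n1 + n2)
    (q0 q1 q2 : ℝ) (hq0 : q0 = n0 / n) (hq1 : q1 = n1 / n) (hq2 : q2 = n2 / n)
    (xval : Fin (n0 + n1 + n2) → ℝ)
    (hxval : ∀ i, xval i = if (i : ℕ) < n0 then 0 else if (i : ℕ) < n0 + n1 then γ else 1)
    (X : Matrix (Fin (n0 + n1 + n2)) (Fin 3) ℝ)
    (hX : ∀ i, X i = ![1, xval i, if γ ≤ xval i then xval i - γ else 0]) :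
    IsUnit (Xᵀ * X).det ∧
    (σ ^ 2 • (Xᵀ * X)⁻¹) 1 1 = σ ^ 2 / γ ^ 2 * (1 / (n * q0) + 1 / (n * q1)) := by
  obtain ⟨hγ0, hγ1⟩ := hγ
  have hXk : ∀ k : Fin (n0 + n1 + n2),
      X k = if (k : ℕ) < n0 then ![1, 0, 0]
        else if (k : ℕ) < n0 + n1 then ![1, γ, 0] else ![1, 1, 1 - γ] := by
    intro k
    rw [hX k, hxval k]
    by_cases hk1 : (k : ℕ) < n0
    · simp [hk1, not_le.mpr hγ0]
    · by_cases hk2 : (k : ℕ) < n0 + n1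
      · simp [hk1, hk2]
      · simp [hk1, hk2, hγ1.le]
  have key : ∀ e0 e1 e2 : ℝ,
      ∑ k : Fin (n0 + n1 + n2),
        (if (k : ℕ) < n0 then e0 else if (k : ℕ) < n0 + n1 then e1 else e2)
      = n0 * e0 + n1 * e1 + n2 * e2 := by
    intro e0 e1 e2
    rw [Fin.sum_univ_eq_sum_range
      (fun k => if k < n0 then e0 else if k < n0 + n1 then e1 else e2)]
    exact sum_three_blocks n0 n1 n2 e0 e1 e2
  have hentry : ∀ i j : Fin 3, (Xᵀ * X) i j
      = n0 * ((![1, 0, 0] : Fin 3 → ℝ) i * ![1, 0, 0] j)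
        + n1 * ((![1, γ, 0] : Fin 3 → ℝ) i * ![1, γ, 0] j)
        + n2 * ((![1, 1, 1 - γ] : Fin 3 → ℝ) i * ![1, 1, 1 - γ] j) := by
    intro i j
    rw [Matrix.mul_apply]
    rw [Finset.sum_congr rfl (fun k _ => ?_), key]
    rw [Matrix.transpose_apply, hXk k]
    split_ifs <;> rfl
  have ha0 : (0 : ℝ) < (n0 : ℝ) := by exact_mod_cast h0
  have hb0 : (0 : ℝ) < (n1 : ℝ) := by exact_mod_cast h1
  have hc0 : (0 : ℝ) < (n2 : ℝ) := by exact_mod_cast h2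
  have ht0 : (0 : ℝ) < 1 - γ := by linarith
  have hM : Xᵀ * X = !![(n0 : ℝ) + n1 + n2, n1 * γ + n2, n2 * (1 - γ);
      n1 * γ + n2, n1 * γ ^ 2 + n2, n2 * (1 - γ);
      n2 * (1 - γ), n2 * (1 - γ), n2 * (1 - γ) ^ 2] := by
    ext i j
    rw [hentry i j]
    fin_cases i <;> fin_cases j <;> simp <;> (try ring_nf) <;> tauto
  have hdet : (Xᵀ * X).det = n0 * n1 * n2 * γ ^ 2 * (1 - γ) ^ 2 := by
    rw [hM, Matrix.det_fin_three]
    simp only [Matrix.cons_val', Matrix.cons_val_zero, Matrix.cons_val_one,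
      Matrix.head_cons, Matrix.head_fin_const, Matrix.empty_val',
      Matrix.cons_val_fin_one, Matrix.of_apply, Matrix.cons_val_two, Matrix.tail_cons]
    ring
  have hdetpos : 0 < (Xᵀ * X).det := by rw [hdet]; positivity
  have hn0 : n ≠ 0 := by rw [hn]; positivity
  have hnq0 : n * q0 = n0 := by rw [hq0]; field_simp
  have hnq1 : n * q1 = n1 := by rw [hq1]; field_simp
  refine ⟨isUnit_iff_ne_zero.mpr hdetpos.ne', ?_⟩
  have hinv : (Xᵀ * X)⁻¹ 1 1 = ((n0 : ℝ) + n1) / (n0 * n1 * γ ^ 2) := by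
    rw [Matrix.inv_def, Matrix.smul_apply, Ring.inverse_eq_inv', hdet, hM,
      Matrix.adjugate_fin_three_of]
    simp only [Matrix.cons_val', Matrix.cons_val_zero, Matrix.cons_val_one,
      Matrix.head_cons, Matrix.head_fin_const, Matrix.empty_val',
      Matrix.cons_val_fin_one, Matrix.of_apply, Matrix.cons_val_two, Matrix.tail_cons,
      smul_eq_mul]
    field_simp
    ring
  rw [Matrix.smul_apply, hinv, hnq0, hnq1, smul_eq_mul]
  field_simp
  ring
end

section
/- Under the same three-point design, the (3,3) entry of σ²(X_γᵀX_γ)^{-1} equals σ²/(γ²(1-γ)²) · ((1-γ)²/(n q_0) + 1/(n q_1) + γ²/(n q_2)). -/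
open Matrix Finset

lemma blocks_sum (n0 n1 n2 : ℕ) (a b c : ℝ) :
    ∑ k ∈ Finset.range (n0+n1+n2), (if k < n0 then a else if k < n0+n1 then b else c)
      = n0 * a + n1 * b + n2 * c := by
  rw [Finset.range_eq_Ico,
    ← Finset.sum_Ico_consecutive _ (Nat.zero_le (n0+n1)) (by omega : n0+n1 ≤ n0+n1+n2),
    ← Finset.sum_Ico_consecutive _ (Nat.zero_le n0) (by omega : n0 ≤ n0+n1)]
  have e1 : ∑ k ∈ Finset.Ico 0 n0, (if k < n0 then a else if k < n0+n1 then b else c)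
      = n0 * a := by
    have h : ∀ k ∈ Finset.Ico 0 n0, (if k < n0 then a else if k < n0+n1 then b else c) = a :=
      fun k hk => by rw [Finset.mem_Ico] at hk; rw [if_pos (by omega)]
    rw [Finset.sum_congr rfl h, Finset.sum_const, Nat.card_Ico, nsmul_eq_mul]
    simp
  have e2 : ∑ k ∈ Finset.Ico n0 (n0+n1), (if k < n0 then a else if k < n0+n1 then b else c)
      = n1 * b := by
    have h : ∀ k ∈ Finset.Ico n0 (n0+n1), (if k < n0 then a else if k < n0+n1 then b else c) = b :=
      fun k hk => by rw [Finset.mem_Ico] at hk; rw [if_neg (by omega), if_pos (by omega)]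
    rw [Finset.sum_congr rfl h, Finset.sum_const, Nat.card_Ico, nsmul_eq_mul]
    simp
  have e3 : ∑ k ∈ Finset.Ico (n0+n1) (n0+n1+n2), (if k < n0 then a else if k < n0+n1 then b else c)
      = n2 * c := by
    have h : ∀ k ∈ Finset.Ico (n0+n1) (n0+n1+n2), (if k < n0 then a else if k < n0+n1 then b else c) = c :=
      fun k hk => by rw [Finset.mem_Ico] at hk; rw [if_neg (by omega), if_neg (by omega)]
    rw [Finset.sum_congr rfl h, Finset.sum_const, Nat.card_Ico, nsmul_eq_mul]
    simp
  rw [e1, e2, e3]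

lemma sum_xval (n0 n1 n2 : ℕ) (γ : ℝ) (xval : Fin (n0+n1+n2) → ℝ)
    (hxval : ∀ i, xval i = if (i : ℕ) < n0 then 0 else if (i : ℕ) < n0 + n1 then γ else 1)
    (F : ℝ → ℝ) :
    ∑ i, F (xval i) = n0 * F 0 + n1 * F γ + n2 * F 1 := by
  simp only [hxval]
  rw [Fin.sum_univ_eq_sum_range
    (fun k => F (if k < n0 then 0 else if k < n0+n1 then γ else 1))]
  rw [← blocks_sum n0 n1 n2 (F 0) (F γ) (F 1)]
  refine Finset.sum_congr rfl fun k _ => ?_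
  split_ifs <;> rfl

/-- For the broken-stick design matrix with `n q₀` visits at 0, `n q₁` at γ and `n q₂` at 1,
`XᵀX` is invertible and the (3,3) entry of `σ²(XᵀX)⁻¹` equals `σ²/(γ²(1-γ)²) ((1-γ)²/(nq₀) + 1/(nq₁) + γ²/(nq₂))`. -/
theorem stmt_9 (γ σ : ℝ) (hγ : γ ∈ Set.Ioo (0 : ℝ) 1) (hσ : 0 < σ)
    (n0 n1 n2 : ℕ) (h0 : 0 < n0) (h1 : 0 < n1) (h2 : 0 < n2)
    (n : ℝ) (hn : n = (n0 : ℝ) + n1 + n2)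
    (q0 q1 q2 : ℝ) (hq0 : q0 = n0 / n) (hq1 : q1 = n1 / n) (hq2 : q2 = n2 / n)
    (xval : Fin (n0 + n1 + n2) → ℝ)
    (hxval : ∀ i, xval i = if (i : ℕ) < n0 then 0 else if (i : ℕ) < n0 + n1 then γ else 1)
    (X : Matrix (Fin (n0 + n1 + n2)) (Fin 3) ℝ)
    (hX : ∀ i, X i = ![1, xval i, if γ ≤ xval i then xval i - γ else 0]) :
    IsUnit (Xᵀ * X).det ∧
    (σ ^ 2 • (Xᵀ * X)⁻¹) 2 2 = σ ^ 2 / (γ ^ 2 * (1 - γ) ^ 2) * ((1 - γ) ^ 2 / (n * q0) + 1 / (n * q1) + γ ^ 2 / (n * q2)) := by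
  obtain ⟨hγ0, hγ1⟩ := hγ
  have hng0 : ¬ (γ ≤ (0:ℝ)) := not_le.mpr hγ0
  have hgg : γ ≤ γ := le_refl γ
  have hg1 : γ ≤ (1:ℝ) := le_of_lt hγ1
  have key : ∀ F : ℝ → ℝ, (∑ i, F (xval i)) = n0 * F 0 + n1 * F γ + n2 * F 1 :=
    fun F => sum_xval n0 n1 n2 γ xval hxval F
  have hS : Xᵀ * X = !![(n0:ℝ)+n1+n2, n1*γ+n2, n2*(1-γ);
                        n1*γ+n2, n1*γ^2+n2, n2*(1-γ);
                        n2*(1-γ), n2*(1-γ), n2*(1-γ)^2] := by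
    ext i j
    fin_cases i <;> fin_cases j <;> simp [Matrix.mul_apply, hX]
    · have h := key (fun x => x)
      beta_reduce at h
      rw [h]; ring
    · have h := key (fun x => if γ ≤ x then x - γ else 0)
      beta_reduce at h
      rw [h]; simp only [if_neg hng0, if_pos hgg, if_pos hg1]; ring
    · have h := key (fun x => x)
      beta_reduce at h
      rw [h]; ring
    · have h := key (fun x => x * x)
      beta_reduce at h
      rw [h]; ring
    · have h := key (fun x => if γ ≤ x then x * (x - γ) else 0)
      beta_reduce at h
      rw [h]; simp only [if_neg hng0, if_pos hgg, if_pos hg1]; ring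
    · have h := key (fun x => if γ ≤ x then x - γ else 0)
      beta_reduce at h
      rw [h]; simp only [if_neg hng0, if_pos hgg, if_pos hg1]; ring
    · have h := key (fun x => if γ ≤ x then (x - γ) * x else 0)
      beta_reduce at h
      rw [h]; simp only [if_neg hng0, if_pos hgg, if_pos hg1]; ring
    · have h := key (fun x => if γ ≤ x then if γ ≤ x then (x - γ) * (x - γ) else 0 else 0)
      beta_reduce at h
      rw [h]; simp only [if_neg hng0, if_pos hgg, if_pos hg1]; ring
  have hn0 : (0:ℝ) < n0 := by exact_mod_cast h0
  have hn1 : (0:ℝ) < n1 := by exact_mod_cast h1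
  have hn2 : (0:ℝ) < n2 := by exact_mod_cast h2
  have hdet : (Xᵀ * X).det = n0 * n1 * n2 * γ^2 * (1-γ)^2 := by
    rw [hS, Matrix.det_fin_three]
    simp [Matrix.cons_val_zero, Matrix.cons_val_one, Matrix.head_cons]
    ring
  have h1γ : (0:ℝ) < 1 - γ := by linarith
  have hdetne : (Xᵀ * X).det ≠ 0 := by
    rw [hdet]
    exact ne_of_gt (by positivity)
  refine ⟨isUnit_iff_ne_zero.mpr hdetne, ?_⟩
  have hinv : (Xᵀ * X)⁻¹ 2 2 = ((Xᵀ * X).det)⁻¹ * (Xᵀ * X).adjugate 2 2 := by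
    rw [Matrix.inv_def]
    simp [Ring.inverse_eq_inv']
  have hadj : (Xᵀ * X).adjugate 2 2 = n0*n1*γ^2 + n0*n2 + n1*n2*(1-γ)^2 := by
    rw [hS, Matrix.adjugate_fin_three]
    simp
    ring
  have hnne : n ≠ 0 := by rw [hn]; positivity
  have hnq0 : n * q0 = n0 := by
    rw [hq0]; field_simp
  have hnq1 : n * q1 = n1 := by
    rw [hq1]; field_simp
  have hnq2 : n * q2 = n2 := by
    rw [hq2]; field_simp
  have : (σ ^ 2 • (Xᵀ * X)⁻¹) 2 2 = σ^2 * ((Xᵀ * X)⁻¹ 2 2) := by simp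
  rw [this, hinv, hdet, hadj, hnq0, hnq1, hnq2]
  have hγne : γ ≠ 0 := ne_of_gt hγ0
  have h1γne : (1-γ) ≠ 0 := by linarith
  field_simp
  ring
end
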